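/- arXiv:2308.05292 — 3 statements merged into one kernel-verified Lean document; each statement's English description precedes it below -/
import Mathlib

section
/- Let F_j: ℝ^p → ℝ, j = 1,...,J, each have L-Lipschitz gradient, let F = (1/J)∑_j F_j, and let i be a uniformly random index in {1,...,J}. For points x, y, x* ∈ ℝ^p define g = ∇F_i(x) - ∇F_i(y) + ∇F(y). Then E[g] = ∇F(x) and E||g - ∇F(x)||^2 ≤ 2L^2||x - x*||^2 + 2L^2||y - x*||^2. -/
theorem lsvrg_variance_bound (p J : ℕ) [NeZero J] (L : ℝ) (hL : 0 ≤ L)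
    (G : Fin J → EuclideanSpace ℝ (Fin p) → EuclideanSpace ℝ (Fin p))
    (hlip : ∀ j, LipschitzWith (Real.toNNReal L) (G j))
    (x y xs : EuclideanSpace ℝ (Fin p)) :
    (J : ℝ)⁻¹ • (∑ i, (G i x - G i y + (J : ℝ)⁻¹ • ∑ j, G j y))
       = (J : ℝ)⁻¹ • ∑ j, G j x ∧
    (J : ℝ)⁻¹ * ∑ i, ‖(G i x - G i y + (J : ℝ)⁻¹ • ∑ j, G j y) - (J : ℝ)⁻¹ • ∑ j, G j x‖ ^ 2
      ≤ 2 * L ^ 2 * ‖x - xs‖ ^ 2 + 2 * L ^ 2 * ‖y - xs‖ ^ 2 := by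
  have hJ : (J : ℝ) ≠ 0 := Nat.cast_ne_zero.mpr (NeZero.ne J)
  have hJpos : (0 : ℝ) < (J : ℝ) := by positivity
  set a : Fin J → EuclideanSpace ℝ (Fin p) := fun i => G i x - G i y with ha
  set abar : EuclideanSpace ℝ (Fin p) := (J : ℝ)⁻¹ • ∑ i, a i with habar
  have hsum : ∑ i, a i = (J : ℝ) • abar := by
    rw [habar, smul_smul, mul_inv_cancel₀ hJ, one_smul]
  constructor
  · rw [Finset.sum_add_distrib, Finset.sum_const, Finset.card_univ, Fintype.card_fin,
      Finset.sum_sub_distrib]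
    match_scalars <;> field_simp <;> ring
  · -- rewrite each summand
    have hterm : ∀ i : Fin J,
        (G i x - G i y + (J : ℝ)⁻¹ • ∑ j, G j y) - (J : ℝ)⁻¹ • ∑ j, G j x = a i - abar := by
      intro i
      rw [habar, ha]
      simp only [Finset.sum_sub_distrib, smul_sub]
      abel
    have key : ∑ i, ‖a i - abar‖ ^ 2 ≤ ∑ i, ‖a i‖ ^ 2 := by
      have expand : ∀ i : Fin J, ‖a i - abar‖ ^ 2
          = ‖a i‖ ^ 2 - 2 * inner ℝ (a i) abar + ‖abar‖ ^ 2 := fun i => by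
        rw [← real_inner_self_eq_norm_sq, ← real_inner_self_eq_norm_sq,
          ← real_inner_self_eq_norm_sq, inner_sub_sub_self, real_inner_comm abar (a i)]
        ring
      calc ∑ i, ‖a i - abar‖ ^ 2
          = ∑ i, ‖a i‖ ^ 2 - 2 * ((J:ℝ) * ‖abar‖ ^ 2) + (J:ℝ) * ‖abar‖ ^ 2 := by
            simp only [expand, Finset.sum_add_distrib, Finset.sum_sub_distrib,
              Finset.sum_const, Finset.card_univ, Fintype.card_fin, nsmul_eq_mul,
              ← Finset.mul_sum, ← Finset.sum_mul]
            rw [← sum_inner, hsum, real_inner_smul_left, real_inner_self_eq_norm_sq]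
        _ = ∑ i, ‖a i‖ ^ 2 - (J:ℝ) * ‖abar‖ ^ 2 := by ring
        _ ≤ ∑ i, ‖a i‖ ^ 2 := by nlinarith [norm_nonneg abar, sq_nonneg ‖abar‖]
    have hbdd : ∀ i : Fin J, ‖a i‖ ^ 2 ≤ L ^ 2 * ‖x - y‖ ^ 2 := by
      intro i
      have h1 : ‖a i‖ ≤ L * ‖x - y‖ := by
        have := (hlip i).dist_le_mul x y
        rwa [Real.coe_toNNReal _ hL, dist_eq_norm, dist_eq_norm] at this
      nlinarith [norm_nonneg (a i), norm_nonneg (x - y), mul_nonneg hL (norm_nonneg (x - y))]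
    have hsum2 : ∑ i, ‖a i‖ ^ 2 ≤ (J : ℝ) * (L ^ 2 * ‖x - y‖ ^ 2) := by
      calc ∑ i, ‖a i‖ ^ 2 ≤ ∑ _i : Fin J, L ^ 2 * ‖x - y‖ ^ 2 :=
            Finset.sum_le_sum fun i _ => hbdd i
        _ = (J : ℝ) * (L ^ 2 * ‖x - y‖ ^ 2) := by
            simp [Finset.sum_const, Finset.card_univ, mul_comm]
    have htri : ‖x - y‖ ≤ ‖x - xs‖ + ‖y - xs‖ := by
      have : x - y = (x - xs) - (y - xs) := by abel
      rw [this]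
      exact norm_sub_le _ _
    have hfin : L ^ 2 * ‖x - y‖ ^ 2 ≤ 2 * L ^ 2 * ‖x - xs‖ ^ 2 + 2 * L ^ 2 * ‖y - xs‖ ^ 2 := by
      nlinarith [sq_nonneg L, norm_nonneg (x - y), norm_nonneg (x - xs), norm_nonneg (y - xs),
        sq_nonneg (‖x - xs‖ - ‖y - xs‖), sq_nonneg ‖x-y‖,
        mul_le_mul_of_nonneg_left (mul_self_le_mul_self (norm_nonneg (x-y)) htri) (sq_nonneg L)]
    calc (J : ℝ)⁻¹ * ∑ i, ‖(G i x - G i y + (J : ℝ)⁻¹ • ∑ j, G j y) - (J : ℝ)⁻¹ • ∑ j, G j x‖ ^ 2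
        = (J : ℝ)⁻¹ * ∑ i, ‖a i - abar‖ ^ 2 := by simp only [hterm]
      _ ≤ (J : ℝ)⁻¹ * ((J : ℝ) * (L ^ 2 * ‖x - y‖ ^ 2)) := by
          apply mul_le_mul_of_nonneg_left (le_trans key hsum2) (by positivity)
      _ = L ^ 2 * ‖x - y‖ ^ 2 := by field_simp
      _ ≤ _ := hfin
end

section
/- Let F_j: ℝ^p → ℝ, j = 1,...,J, each have L-Lipschitz gradient, F = (1/J)∑_j F_j, and let φ_1,...,φ_J ∈ ℝ^p be stored reference points. Let i be uniform on {1,...,J} and define g = ∇F_i(x) - ∇F_i(φ_i) + (1/J)∑_{j=1}^J ∇F_j(φ_j). Then E[g] = ∇F(x) and E||g - ∇F(x)||^2 ≤ 2L^2||x - x*||^2 + (2L^2/J)∑_{j=1}^J||φ_j - x*||^2, for any x* ∈ ℝ^p. -/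
open Finset

lemma sum_sq_sub_mean_le {E : Type*} [NormedAddCommGroup E] [InnerProductSpace ℝ E]
    {J : ℕ} (hJ : (J:ℝ) ≠ 0) (v : Fin J → E) :
    ∑ i, ‖v i - (J : ℝ)⁻¹ • ∑ j, v j‖ ^ 2 ≤ ∑ i, ‖v i‖ ^ 2 := by
  set m := (J : ℝ)⁻¹ • ∑ j, v j with hm
  have key : ∑ i, ‖v i - m‖ ^ 2 = ∑ i, ‖v i‖ ^ 2 - (J:ℝ) * ‖m‖ ^ 2 := by
    have expand : ∀ i ∈ Finset.univ, ‖v i - m‖ ^ 2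
        = ‖v i‖ ^ 2 - 2 * inner ℝ (v i) m + ‖m‖ ^ 2 := fun i _ => by
      rw [norm_sub_sq_real]
    rw [Finset.sum_congr rfl expand]
    have h1 : ∑ i : Fin J, (inner ℝ (v i) m : ℝ) = (J:ℝ) * ‖m‖ ^ 2 := by
      rw [← sum_inner]
      have h2 : (∑ i, v i) = (J:ℝ) • m := by
        rw [hm, smul_smul, mul_inv_cancel₀ hJ, one_smul]
      rw [h2, inner_smul_left]
      simp [real_inner_self_eq_norm_sq]
    rw [Finset.sum_add_distrib, Finset.sum_sub_distrib, ← Finset.mul_sum, h1,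
      Finset.sum_const, card_univ, Fintype.card_fin, nsmul_eq_mul]
    ring
  rw [key]
  have : 0 ≤ (J:ℝ) * ‖m‖ ^ 2 := by positivity
  linarith

theorem saga_variance_bound (p J : ℕ) [NeZero J] (L : ℝ) (hL : 0 ≤ L)
    (G : Fin J → EuclideanSpace ℝ (Fin p) → EuclideanSpace ℝ (Fin p))
    (hlip : ∀ j, LipschitzWith (Real.toNNReal L) (G j))
    (φ : Fin J → EuclideanSpace ℝ (Fin p))
    (x xs : EuclideanSpace ℝ (Fin p)) :
    (J : ℝ)⁻¹ • (∑ i, (G i x - G i (φ i) + (J : ℝ)⁻¹ • ∑ j, G j (φ j)))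
       = (J : ℝ)⁻¹ • ∑ j, G j x ∧
    (J : ℝ)⁻¹ * ∑ i, ‖(G i x - G i (φ i) + (J : ℝ)⁻¹ • ∑ j, G j (φ j)) - (J : ℝ)⁻¹ • ∑ j, G j x‖ ^ 2
      ≤ 2 * L ^ 2 * ‖x - xs‖ ^ 2 + (2 * L ^ 2 / J) * ∑ j, ‖φ j - xs‖ ^ 2 := by
  have hJ : (J:ℝ) ≠ 0 := Nat.cast_ne_zero.mpr (NeZero.ne J)
  have hJpos : (0:ℝ) < J := by positivity
  set v : Fin J → EuclideanSpace ℝ (Fin p) := fun i => G i x - G i (φ i) with hv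
  constructor
  · congr 1
    rw [Finset.sum_add_distrib, Finset.sum_sub_distrib, Finset.sum_const, card_univ,
      Fintype.card_fin, ← Nat.cast_smul_eq_nsmul ℝ, smul_smul, mul_inv_cancel₀ hJ, one_smul]
    abel
  · have hterm : ∀ i ∈ Finset.univ, ‖(G i x - G i (φ i) + (J:ℝ)⁻¹ • ∑ j, G j (φ j))
        - (J:ℝ)⁻¹ • ∑ j, G j x‖ ^ 2 = ‖v i - (J:ℝ)⁻¹ • ∑ j, v j‖ ^ 2 := fun i _ => by
      congr 2
      rw [hv]
      simp only [Finset.sum_sub_distrib, smul_sub]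
      abel
    rw [Finset.sum_congr rfl hterm]
    have h1 := sum_sq_sub_mean_le hJ v
    have h2 : ∑ i, ‖v i‖ ^ 2
        ≤ ∑ i : Fin J, (2 * L ^ 2 * ‖x - xs‖ ^ 2 + 2 * L ^ 2 * ‖φ i - xs‖ ^ 2) := by
      apply Finset.sum_le_sum
      intro i _
      have la : ‖G i x - G i xs‖ ≤ L * ‖x - xs‖ := by
        have := (hlip i).dist_le_mul x xs
        rwa [Real.coe_toNNReal L hL, dist_eq_norm, dist_eq_norm] at this
      have lb : ‖G i (φ i) - G i xs‖ ≤ L * ‖φ i - xs‖ := by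
        have := (hlip i).dist_le_mul (φ i) xs
        rwa [Real.coe_toNNReal L hL, dist_eq_norm, dist_eq_norm] at this
      have htri : ‖v i‖ ≤ ‖G i x - G i xs‖ + ‖G i (φ i) - G i xs‖ := by
        rw [hv]
        calc ‖G i x - G i (φ i)‖ = ‖(G i x - G i xs) - (G i (φ i) - G i xs)‖ := by abel_nf
        _ ≤ _ := norm_sub_le _ _
      have h0 : 0 ≤ ‖v i‖ := norm_nonneg _
      nlinarith [norm_nonneg (G i x - G i xs), norm_nonneg (G i (φ i) - G i xs),
        norm_nonneg (x - xs), norm_nonneg (φ i - xs),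
        sq_nonneg (‖G i x - G i xs‖ - ‖G i (φ i) - G i xs‖)]
    rw [Finset.sum_add_distrib, Finset.sum_const, card_univ, Fintype.card_fin,
      nsmul_eq_mul, ← Finset.mul_sum] at h2
    have h3 : ∑ i, ‖v i - (J:ℝ)⁻¹ • ∑ j, v j‖ ^ 2
        ≤ (J:ℝ) * (2 * L ^ 2 * ‖x - xs‖ ^ 2) + 2 * L ^ 2 * ∑ i, ‖φ i - xs‖ ^ 2 :=
      le_trans h1 h2
    rw [div_eq_mul_inv, mul_comm _ ((J:ℝ)⁻¹)]
    have := mul_le_mul_of_nonneg_left h3 (by positivity : (0:ℝ) ≤ (J:ℝ)⁻¹)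
    calc (J:ℝ)⁻¹ * ∑ i, ‖v i - (J:ℝ)⁻¹ • ∑ j, v j‖ ^ 2
        ≤ (J:ℝ)⁻¹ * ((J:ℝ) * (2 * L ^ 2 * ‖x - xs‖ ^ 2) + 2 * L ^ 2 * ∑ i, ‖φ i - xs‖ ^ 2) := this
      _ = 2 * L ^ 2 * ‖x - xs‖ ^ 2 + (J:ℝ)⁻¹ * (2 * L ^ 2) * ∑ j, ‖φ j - xs‖ ^ 2 := by
          field_simp
end

section
/- Consider the scalar iteration where agent w's model satisfies x_w^k ∈ x_w^0 + span{ĥ_w^0, ..., ĥ_w^{k-1}}, with x_w^0 = 0, h_w^k = -λB_w (the true gradient of F_w(x) = x^2/2 - λB_w x at 0), and ĥ_w^k = h_w^k + λ∑_{v∈R_w} sign(x_w^k - x_v^k) + λ∑_{v∈B_w} sign(x_w^k - z_v^k). If all regular agents start at 0, sign(0) = 0 is used, and the Byzantine messages satisfy ∑_{v∈B_w} sign(x_w^k - z_v^k) = B_w at every k, then x_w^k = 0 for all k, and hence ||x_w^k - x_w*||^2 = λ^2 B_w^2 where x_w* = λB_w. -/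
/-- Lower-bound construction (Theorem 2, scalar case): with local costs
`F_w(x) = x^2/2 - λ B_w x`, zero initialization, `sign 0 = 0`, and Byzantine
messages chosen so that each Byzantine sign-sum equals `B_w`, any method
satisfying the span condition keeps every regular iterate at `0`, hence its
squared error is `λ² B_w²`. -/
theorem lower_bound_construction (R : ℕ) (lam : ℝ) (hlam : 0 < lam)
    (B : Fin R → ℝ) (hB : ∀ w, 0 ≤ B w)
    (Rw : Fin R → Finset (Fin R))
    (sgn : ℝ → ℝ) (hsgn0 : sgn 0 = 0) (hsgn : ∀ t, |sgn t| ≤ 1)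
    (x : Fin R → ℕ → ℝ) (hx0 : ∀ w, x w 0 = 0)
    (byz : Fin R → ℕ → ℝ) (hbyz : ∀ w k, byz w k = B w)
    (hhat : Fin R → ℕ → ℝ)
    (hhat_def : ∀ w k, hhat w k = -lam * B w
        + lam * ∑ v ∈ Rw w, sgn (x w k - x v k) + lam * byz w k)
    (hspan : ∀ w k, ∃ c : ℕ → ℝ,
        x w (k + 1) = x w 0 + ∑ i ∈ Finset.range (k + 1), c i * hhat w i) :
    ∀ w k, x w k = 0 ∧ (x w k - lam * B w) ^ 2 = lam ^ 2 * (B w) ^ 2 := by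
  have hzero : ∀ k w, x w k = 0 := by
    intro k
    induction k using Nat.strong_induction_on with
    | _ k ih =>
      match k with
      | 0 => exact hx0
      | k + 1 =>
        intro w
        obtain ⟨c, hc⟩ := hspan w k
        have hhat0 : ∀ i ∈ Finset.range (k + 1), c i * hhat w i = 0 := by
          intro i hi
          simp only [Finset.mem_range] at hi
          have : hhat w i = 0 := by
            rw [hhat_def, hbyz]
            have : ∀ v ∈ Rw w, sgn (x w i - x v i) = 0 := by
              intro v _
              rw [ih i hi w, ih i hi v, sub_zero, hsgn0]
            rw [Finset.sum_congr rfl this]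
            simp
          rw [this, mul_zero]
        rw [hc, hx0, Finset.sum_eq_zero hhat0, add_zero]
  intro w k
  refine ⟨hzero k w, ?_⟩
  rw [hzero k w]
  ring
end
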